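/- Let X be a Banach space, let r > 0, and let (x_j)_{j∈ℕ} be a sequence in the closed unit ball of X that spans the spaces ℓ₁ⁿ r-uniformly. Then there exist pairwise disjoint finite subsets A_i ⊆ ℕ (i ∈ ℕ) and scalars (α_j) such that the block sequence y_i = ∑_{j∈A_i} α_j x_j satisfies: (i) ‖y_i‖ = 1 for all i; (ii) ∑_{j∈A_i} |α_j| < (1 + 2^{-i})/r for all i; and (iii) for each n ∈ ℕ, the finite sequence (y_i)_{i∈B_n}, where B_n = {1 + (n-1)n/2, …, n(n+1)/2}, spans a (1 - 2^{-n})-copy of ℓ₁ⁿ. -/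
import Mathlib

open Finset

section Aux

variable {𝕜 X : Type*} [RCLike 𝕜] [NormedAddCommGroup X] [NormedSpace 𝕜 X]

private lemma coeff_eq' {N : ℕ} {A : Fin N → Finset ℕ}
    (hdisj : ∀ i i' : Fin N, i ≠ i' → Disjoint (A i) (A i')) (γ : Fin N → 𝕜)
    {i : Fin N} {j : ℕ} (hj : j ∈ A i) :
    (∑ i', if j ∈ A i' then γ i' else 0) = γ i := by
  rw [Finset.sum_eq_single i]
  · simp [hj]
  · intro i' _ hne
    have : j ∉ A i' := fun h => (Finset.disjoint_left.1 (hdisj i' i hne) h) hj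
    simp [this]
  · simp

private lemma block_sum_eq' (x : ℕ → X) {N : ℕ} {A : Fin N → Finset ℕ}
    (hdisj : ∀ i i' : Fin N, i ≠ i' → Disjoint (A i) (A i')) (a : ℕ → 𝕜) (γ : Fin N → 𝕜)
    (E : Finset (Fin N)) :
    ∑ j ∈ E.biUnion A, ((∑ i', if j ∈ A i' then γ i' else 0) * a j) • x j
      = ∑ i ∈ E, γ i • ∑ j ∈ A i, a j • x j := by
  rw [Finset.sum_biUnion (fun i _ i' _ hne => hdisj i i' hne)]
  refine Finset.sum_congr rfl fun i _ => ?_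
  rw [Finset.smul_sum]
  refine Finset.sum_congr rfl fun j hj => ?_
  rw [coeff_eq' hdisj γ hj, mul_smul]

private lemma block_norm_sum_eq' (x : ℕ → X) {N : ℕ} {A : Fin N → Finset ℕ}
    (hdisj : ∀ i i' : Fin N, i ≠ i' → Disjoint (A i) (A i')) (a : ℕ → 𝕜) (γ : Fin N → 𝕜)
    (E : Finset (Fin N)) :
    ∑ j ∈ E.biUnion A, ‖(∑ i', if j ∈ A i' then γ i' else 0) * a j‖
      = ∑ i ∈ E, ‖γ i‖ * ∑ j ∈ A i, ‖a j‖ := by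
  rw [Finset.sum_biUnion (fun i _ i' _ hne => hdisj i i' hne)]
  refine Finset.sum_congr rfl fun i _ => ?_
  rw [Finset.mul_sum]
  refine Finset.sum_congr rfl fun j hj => ?_
  rw [coeff_eq' hdisj γ hj, norm_mul]

/-- `t`-good families of `n` disjoint blocks with supports `≥ M`. -/
def Gd (𝕜 : Type*) [RCLike 𝕜] {X : Type*} [NormedAddCommGroup X] [NormedSpace 𝕜 X]
    (x : ℕ → X) (t : ℝ) (n M : ℕ) : Prop :=
  ∃ (A : Fin n → Finset ℕ) (a : ℕ → 𝕜),
    (∀ i i' : Fin n, i ≠ i' → Disjoint (A i) (A i')) ∧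
    (∀ i, ∀ j ∈ A i, M ≤ j) ∧ (∀ i, ∑ j ∈ A i, ‖a j‖ ≤ 1) ∧
    ∀ β : Fin n → 𝕜, t * ∑ i, ‖β i‖ ≤ ‖∑ i, β i • ∑ j ∈ A i, a j • x j‖

end Aux

section Win

/-- window embedding -/
def we (m n₀ : ℕ) (k : Fin n₀) (l : Fin m) : Fin (n₀ * m) :=
  ⟨k * m + l, by
    have h1 : (k : ℕ) * m + l < ((k : ℕ) + 1) * m := by
      have := l.isLt; nlinarith [l.isLt]
    have h2 : ((k : ℕ) + 1) * m ≤ n₀ * m := Nat.mul_le_mul_right m k.isLt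
    omega⟩

lemma we_inj {m n₀ : ℕ} {k k' : Fin n₀} {l l' : Fin m}
    (h : we m n₀ k l = we m n₀ k' l') : k = k' ∧ l = l' := by
  have hm : 0 < m := l.pos
  have h' : (k : ℕ) * m + l = (k' : ℕ) * m + l' := congrArg Fin.val h
  have hk : (k : ℕ) = (k' : ℕ) := by
    have e1 : ((k:ℕ) * m + (l:ℕ)) / m = (k:ℕ) := by
      rw [Nat.mul_comm, Nat.mul_add_div hm]
      simp [Nat.div_eq_of_lt l.isLt]
    have e2 : ((k':ℕ) * m + (l':ℕ)) / m = (k':ℕ) := by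
      rw [Nat.mul_comm, Nat.mul_add_div hm]
      simp [Nat.div_eq_of_lt l'.isLt]
    rw [← e1, ← e2, h']
  have h'' : (k' : ℕ) * m + (l : ℕ) = (k' : ℕ) * m + (l' : ℕ) := by rw [hk] at h'; exact h'
  exact ⟨Fin.ext hk, Fin.ext (by omega)⟩

lemma sumwin {E : Type*} [AddCommMonoid E] {m n₀ : ℕ} (f : Fin (n₀ * m) → E) :
    ∑ i, f i = ∑ k : Fin n₀, ∑ l : Fin m, f (we m n₀ k l) := by
  have bij : Function.Bijective (fun p : Fin n₀ × Fin m => we m n₀ p.1 p.2) := by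
    rw [Fintype.bijective_iff_injective_and_card]
    constructor
    · intro p q h
      obtain ⟨h1, h2⟩ := we_inj h
      exact Prod.ext h1 h2
    · simp [Nat.mul_comm]
  calc ∑ i, f i = ∑ p : Fin n₀ × Fin m, f (we m n₀ p.1 p.2) :=
        (Fintype.sum_bijective _ bij _ _ (fun p => rfl)).symm
    _ = ∑ k : Fin n₀, ∑ l : Fin m, f (we m n₀ k l) := by rw [Fintype.sum_prod_type]

lemma we_val {m n₀ : ℕ} (k : Fin n₀) (l : Fin m) : (we m n₀ k l : ℕ) = k * m + l := rfl

end Win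

section Core

variable {𝕜 X : Type*} [RCLike 𝕜] [NormedAddCommGroup X] [NormedSpace 𝕜 X]

lemma we_pick {m n₀ : ℕ} {α : Type*} [AddCommMonoid α] (G : Fin n₀ → Fin m → α)
    (k : Fin n₀) (l : Fin m) :
    (∑ p : Fin n₀ × Fin m, if we m n₀ k l = we m n₀ p.1 p.2 then G p.1 p.2 else 0) = G k l := by
  rw [Finset.sum_eq_single (k, l)]
  · simp
  · intro p _ hne
    have : ¬ (we m n₀ k l = we m n₀ p.1 p.2) := by
      intro h
      obtain ⟨h1, h2⟩ := we_inj h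
      exact hne (by rw [Prod.ext_iff]; exact ⟨h1.symm, h2.symm⟩)
    simp [this]
  · simp

lemma core (x : ℕ → X) {c t s : ℝ} (hc : 0 < c) (ht : t < c) (hts : 0 ≤ t) (hs : c < s)
    (Hlow : ∀ t' : ℝ, 0 ≤ t' → t' < c → ∀ n M, Gd 𝕜 x t' n M)
    (Hhigh : ∀ s' : ℝ, 0 ≤ s' → (∀ n M, Gd 𝕜 x s' n M) → s' ≤ c) :
    ∀ n M, ∃ (A : Fin n → Finset ℕ) (a : ℕ → 𝕜),
      (∀ i i' : Fin n, i ≠ i' → Disjoint (A i) (A i')) ∧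
      (∀ i, ∀ j ∈ A i, M ≤ j) ∧
      (∀ i, ∑ j ∈ A i, ‖a j‖ ≤ 1) ∧
      (∀ i, ‖∑ j ∈ A i, a j • x j‖ ≤ s) ∧
      ∀ β : Fin n → 𝕜, t * ∑ i, ‖β i‖ ≤ ‖∑ i, β i • ∑ j ∈ A i, a j • x j‖ := by
  by_contra hcon
  rcases not_forall.1 hcon with ⟨n₀, h1⟩
  rcases not_forall.1 h1 with ⟨M₀, hbad⟩
  clear hcon h1
  rcases Nat.eq_zero_or_pos n₀ with h0 | hn₀pos
  · subst h0
    exact hbad ⟨fun i => ∅, fun _ => 0, fun i => i.elim0, fun i => i.elim0, fun i => i.elim0, fun i => i.elim0,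
      fun β => by simp⟩
  have hGds : ∀ m M, Gd 𝕜 x s m M := by
    intro m M
    obtain ⟨A, a, hdisj, hsupp, hcsum, hlow⟩ :=
      Hlow ((t + c) / 2) (by linarith) (by linarith) (n₀ * m) (max M M₀)
    set t' : ℝ := (t + c) / 2 with ht'
    set u : Fin (n₀ * m) → X := fun i => ∑ j ∈ A i, a j • x j with hu
    by_cases hA : ∃ k : Fin n₀, ∀ γ : Fin m → 𝕜,
        ∑ l, ‖γ l‖ = 1 → s ≤ ‖∑ l, γ l • u (we m n₀ k l)‖
    · obtain ⟨k, hk⟩ := hA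
      refine ⟨fun l => A (we m n₀ k l), a, ?_, ?_, ?_, ?_⟩
      · intro l l' hne
        exact hdisj _ _ (fun h => hne (we_inj h).2)
      · intro l j hj
        exact le_trans (le_max_left M M₀) (hsupp _ j hj)
      · intro l; exact hcsum _
      · intro β
        rcases eq_or_lt_of_le (Finset.sum_nonneg fun l _ => norm_nonneg (β l)) with hz | hpos
        · rw [← hz, mul_zero]; exact norm_nonneg _
        set σ : ℝ := ∑ l, ‖β l‖ with hσ
        set γ : Fin m → 𝕜 := fun l => ((σ : 𝕜))⁻¹ * β l with hγ
        have hγsum : ∑ l, ‖γ l‖ = 1 := by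
          simp only [hγ, norm_mul, norm_inv, RCLike.norm_ofReal, abs_of_pos hpos]
          rw [← Finset.mul_sum, ← hσ, inv_mul_cancel₀ (ne_of_gt hpos)]
        have hk' := hk γ hγsum
        have hrw : ∑ l, γ l • u (we m n₀ k l) = ((σ : 𝕜))⁻¹ • ∑ l, β l • u (we m n₀ k l) := by
          rw [Finset.smul_sum]
          exact Finset.sum_congr rfl fun l _ => by rw [hγ, mul_smul]
        rw [hrw, norm_smul, norm_inv, RCLike.norm_ofReal, abs_of_pos hpos,
          inv_mul_eq_div, le_div_iff₀ hpos] at hk'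
        linarith [hk']
    · push_neg at hA
      choose γ hγ1 hγ2 using hA
      exfalso
      apply hbad
      set γ' : Fin (n₀ * m) → 𝕜 :=
        fun i => ∑ p : Fin n₀ × Fin m, if i = we m n₀ p.1 p.2 then γ p.1 p.2 else 0 with hγ'
      have hγ'we : ∀ k l, γ' (we m n₀ k l) = γ k l := fun k l => we_pick γ k l
      set E : Fin n₀ → Finset (Fin (n₀ * m)) :=
        fun k => Finset.image (we m n₀ k) Finset.univ with hE
      have hweinj : ∀ k : Fin n₀, Function.Injective (we m n₀ k) :=
        fun k l l' h => (we_inj h).2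
      set a' : ℕ → 𝕜 := fun j => (∑ i', if j ∈ A i' then γ' i' else 0) * a j with ha'
      have hv : ∀ k, ∑ j ∈ (E k).biUnion A, a' j • x j = ∑ l, γ k l • u (we m n₀ k l) := by
        intro k
        rw [block_sum_eq' x hdisj a γ' (E k), hE, Finset.sum_image (fun l _ l' _ h => hweinj k h)]
        exact Finset.sum_congr rfl fun l _ => by rw [hγ'we]
      refine ⟨fun k => (E k).biUnion A, a', ?_, ?_, ?_, ?_, ?_⟩
      · intro k k' hne
        rw [Finset.disjoint_left]
        intro j hj hj'
        obtain ⟨i, hi, hji⟩ := Finset.mem_biUnion.1 hj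
        obtain ⟨i', hi', hji'⟩ := Finset.mem_biUnion.1 hj'
        obtain ⟨l, _, rfl⟩ := Finset.mem_image.1 hi
        obtain ⟨l', _, rfl⟩ := Finset.mem_image.1 hi'
        have hii' : we m n₀ k l ≠ we m n₀ k' l' := fun h => hne (we_inj h).1
        exact Finset.disjoint_left.1 (hdisj _ _ hii') hji hji'
      · intro k j hj
        obtain ⟨i, _, hji⟩ := Finset.mem_biUnion.1 hj
        exact le_trans (le_max_right M M₀) (hsupp i j hji)
      · intro k
        rw [block_norm_sum_eq' x hdisj a γ' (E k)]
        calc ∑ i ∈ E k, ‖γ' i‖ * ∑ j ∈ A i, ‖a j‖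
            ≤ ∑ i ∈ E k, ‖γ' i‖ * 1 := Finset.sum_le_sum fun i _ =>
              mul_le_mul_of_nonneg_left (hcsum i) (norm_nonneg _)
          _ = ∑ l, ‖γ k l‖ := by
              rw [hE, Finset.sum_image (fun l _ l' _ h => hweinj k h)]
              exact Finset.sum_congr rfl fun l _ => by rw [mul_one, hγ'we]
          _ = 1 := hγ1 k
      · intro k
        rw [hv k]
        exact le_of_lt (hγ2 k)
      · intro β
        set δ : Fin (n₀ * m) → 𝕜 :=
          fun i => ∑ p : Fin n₀ × Fin m, if i = we m n₀ p.1 p.2 then β p.1 * γ p.1 p.2 else 0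
          with hδ
        have hδwe : ∀ k l, δ (we m n₀ k l) = β k * γ k l :=
          fun k l => we_pick (fun k l => β k * γ k l) k l
        have e1 : ∑ i, δ i • u i = ∑ k, β k • ∑ j ∈ (E k).biUnion A, a' j • x j := by
          rw [sumwin (fun i => δ i • u i)]
          refine Finset.sum_congr rfl fun k _ => ?_
          rw [hv k, Finset.smul_sum]
          exact Finset.sum_congr rfl fun l _ => by rw [hδwe, mul_smul]
        have e2 : ∑ i, ‖δ i‖ = ∑ k, ‖β k‖ := by
          rw [sumwin (fun i => ‖δ i‖)]
          refine Finset.sum_congr rfl fun k _ => ?_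
          calc ∑ l, ‖δ (we m n₀ k l)‖ = ∑ l, ‖β k‖ * ‖γ k l‖ :=
                Finset.sum_congr rfl fun l _ => by rw [hδwe, norm_mul]
            _ = ‖β k‖ := by rw [← Finset.mul_sum, hγ1 k, mul_one]
        have hlowδ := hlow δ
        rw [e2] at hlowδ
        rw [← e1]
        calc t * ∑ k, ‖β k‖ ≤ t' * ∑ k, ‖β k‖ :=
              mul_le_mul_of_nonneg_right (by rw [ht']; linarith)
                (Finset.sum_nonneg fun k _ => norm_nonneg _)
          _ ≤ ‖∑ i, δ i • u i‖ := hlowδ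
  have := Hhigh s (by linarith) hGds
  linarith

end Core

section Base

variable {𝕜 X : Type*} [RCLike 𝕜] [NormedAddCommGroup X] [NormedSpace 𝕜 X]

lemma strictMono_le_apply {N : ℕ} {f : Fin N → ℕ} (hf : StrictMono f) (l : Fin N) :
    (l : ℕ) ≤ f l := by
  obtain ⟨v, hv⟩ := l
  induction v with
  | zero => exact Nat.zero_le _
  | succ w ih =>
    have hw : w < N := by omega
    have h1 : w ≤ f ⟨w, hw⟩ := ih hw
    have h2 : f ⟨w, hw⟩ < f ⟨w + 1, hv⟩ := hf (by simp [Fin.lt_def])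
    show w + 1 ≤ f ⟨w + 1, hv⟩
    omega

lemma base {r : ℝ} (x : ℕ → X)
    (hunif : ∀ n : ℕ, ∃ j : Fin n → ℕ, StrictMono j ∧
      ∀ α : Fin n → 𝕜,
        ‖∑ k, α k • x (j k)‖ ≤ ∑ k, ‖α k‖ ∧
        r * ∑ k, ‖α k‖ ≤ ‖∑ k, α k • x (j k)‖) :
    ∀ n M, Gd 𝕜 x r n M := by
  intro n M
  obtain ⟨j, hmono, hj⟩ := hunif (M + n)
  refine ⟨fun i => {j (Fin.natAdd M i)}, fun _ => 1, ?_, ?_, ?_, ?_⟩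
  · intro i i' hne
    simp only [Finset.disjoint_singleton]
    intro h
    exact hne (by
      have := hmono.injective h
      have h2 : (Fin.natAdd M i : ℕ) = (Fin.natAdd M i' : ℕ) := congrArg Fin.val this
      simp only [Fin.coe_natAdd] at h2
      exact Fin.ext (by omega))
  · intro i j' hj'
    rw [Finset.mem_singleton] at hj'
    subst hj'
    calc M ≤ M + i := Nat.le_add_right _ _
      _ = (Fin.natAdd M i : ℕ) := rfl
      _ ≤ j (Fin.natAdd M i) := strictMono_le_apply hmono _
  · intro i; simp
  · intro β
    set α : Fin (M + n) → 𝕜 := fun l =>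
      if h : M ≤ (l : ℕ) then β ⟨(l : ℕ) - M, by have := l.isLt; omega⟩ else 0 with hα
    have hcast : ∀ i : Fin M, α (Fin.castAdd n i) = 0 := by
      intro i
      have h : ¬ M ≤ ((Fin.castAdd n i : Fin (M + n)) : ℕ) := by
        simp only [Fin.coe_castAdd]
        exact not_le.2 i.isLt
      simp only [hα, dif_neg h]
    have hnat : ∀ i : Fin n, α (Fin.natAdd M i) = β i := by
      intro i
      have h : M ≤ ((Fin.natAdd M i : Fin (M + n)) : ℕ) := by
        simp only [Fin.coe_natAdd]; omega
      simp only [hα, dif_pos h]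
      congr 1
      exact Fin.ext (by simp)
    have e1 : ∑ l, ‖α l‖ = ∑ i, ‖β i‖ := by
      rw [Fin.sum_univ_add (f := fun l => ‖α l‖)]
      simp only [hcast, norm_zero, Finset.sum_const_zero, zero_add]
      exact Finset.sum_congr rfl fun i _ => by rw [hnat]
    have e2 : ∑ l, α l • x (j l) = ∑ i, β i • x (j (Fin.natAdd M i)) := by
      rw [Fin.sum_univ_add (f := fun l => α l • x (j l))]
      simp only [hcast, zero_smul, Finset.sum_const_zero, zero_add]
      exact Finset.sum_congr rfl fun i _ => by rw [hnat]
    have := (hj α).2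
    rw [e1, e2] at this
    calc r * ∑ i, ‖β i‖ ≤ ‖∑ i, β i • x (j (Fin.natAdd M i))‖ := this
      _ = ‖∑ i, β i • ∑ j' ∈ {j (Fin.natAdd M i)}, (1 : 𝕜) • x j'‖ := by
          simp

end Base

section Key

variable {𝕜 X : Type*} [RCLike 𝕜] [NormedAddCommGroup X] [NormedSpace 𝕜 X]

lemma nat_le_tri (n : ℕ) : n ≤ n * (n + 1) / 2 := by
  rcases Nat.eq_zero_or_pos n with h | h
  · omega
  · have h1 : n * 2 ≤ n * (n + 1) := Nat.mul_le_mul_left n (by omega)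
    omega

lemma key (x : ℕ → X) {c : ℝ} (hc : 0 < c)
    (Hlow : ∀ t' : ℝ, 0 ≤ t' → t' < c → ∀ n M, Gd 𝕜 x t' n M)
    (Hhigh : ∀ s' : ℝ, 0 ≤ s' → (∀ n M, Gd 𝕜 x s' n M) → s' ≤ c) (n M : ℕ) :
    ∃ (A : Fin n → Finset ℕ) (a : ℕ → 𝕜),
      (∀ i i' : Fin n, i ≠ i' → Disjoint (A i) (A i')) ∧
      (∀ i, ∀ j ∈ A i, M ≤ j) ∧
      (∀ i, ‖∑ j ∈ A i, a j • x j‖ = 1) ∧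
      (∀ i, ∑ j ∈ A i, ‖a j‖ ≤ (c * (1 - (1/2 : ℝ) ^ (n * (n + 1) / 2 + 2)))⁻¹) ∧
      ∀ β : Fin n → 𝕜,
        (1 - (1/2 : ℝ) ^ n) * ∑ i, ‖β i‖ ≤ ‖∑ i, β i • ∑ j ∈ A i, a j • x j‖ := by
  set ε : ℝ := (1/2 : ℝ) ^ (n * (n + 1) / 2 + 2) with hεdef
  set d : ℝ := (1/2 : ℝ) ^ n with hddef
  have hε0 : 0 < ε := by positivity
  have hd0 : 0 < d := by positivity
  have hd1 : d ≤ 1 := by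
    rw [hddef]
    exact pow_le_one₀ (by norm_num) (by norm_num)
  have hεn : ε ≤ (1/2 : ℝ) ^ (n + 2) :=
    pow_le_pow_of_le_one (by norm_num) (by norm_num) (by have := nat_le_tri n; omega)
  have h4 : 4 * ε ≤ d := by
    have h5 : (1/2 : ℝ) ^ (n + 2) = d / 4 := by
      rw [pow_add, hddef]; ring
    linarith
  have hε1 : ε ≤ 1/4 := by nlinarith
  set t : ℝ := c * (1 - ε) with htdef
  set s : ℝ := c * (1 + ε) with hsdef
  have ht : t < c := by nlinarith
  have hts : 0 ≤ t := by nlinarith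
  have ht0 : 0 < t := by nlinarith
  have hs : c < s := by nlinarith
  have hs0 : 0 < s := by nlinarith
  obtain ⟨A, a, hdisj, hsupp, hcsum, hnub, hlow⟩ := core x hc ht hts hs Hlow Hhigh n M
  set u : Fin n → X := fun i => ∑ j ∈ A i, a j • x j with hu
  have hnlb : ∀ i, t ≤ ‖u i‖ := by
    intro i
    have h1 : ∑ l, ‖(fun l => if l = i then (1:𝕜) else 0) l‖ = 1 := by
      simp [apply_ite (norm : 𝕜 → ℝ)]
    have h2 : ∑ l, (if l = i then (1:𝕜) else 0) • u l = u i := by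
      simp [ite_smul]
    have := hlow (fun l => if l = i then (1:𝕜) else 0)
    rw [h1, h2, mul_one] at this
    exact this
  have hupos : ∀ i, 0 < ‖u i‖ := fun i => lt_of_lt_of_le ht0 (hnlb i)
  set γ : Fin n → 𝕜 := fun i => ((‖u i‖⁻¹ : ℝ) : 𝕜) with hγdef
  set a' : ℕ → 𝕜 := fun j => (∑ i', if j ∈ A i' then γ i' else 0) * a j with ha'
  have hy : ∀ i, ∑ j ∈ A i, a' j • x j = γ i • u i := by
    intro i
    have := block_sum_eq' x hdisj a γ {i}
    rw [Finset.singleton_biUnion, Finset.sum_singleton] at this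
    exact this
  have hynorm : ∀ i, ‖∑ j ∈ A i, a' j • x j‖ = 1 := by
    intro i
    rw [hy i, norm_smul, hγdef, RCLike.norm_ofReal, abs_of_pos (inv_pos.2 (hupos i)),
      inv_mul_cancel₀ (ne_of_gt (hupos i))]
  refine ⟨A, a', hdisj, hsupp, hynorm, ?_, ?_⟩
  · intro i
    have := block_norm_sum_eq' x hdisj a γ {i}
    rw [Finset.singleton_biUnion, Finset.sum_singleton] at this
    rw [ha']
    rw [this, hγdef, RCLike.norm_ofReal, abs_of_pos (inv_pos.2 (hupos i))]
    calc ‖u i‖⁻¹ * ∑ j ∈ A i, ‖a j‖ ≤ ‖u i‖⁻¹ * 1 :=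
          mul_le_mul_of_nonneg_left (hcsum i) (by positivity)
      _ = ‖u i‖⁻¹ := mul_one _
      _ ≤ t⁻¹ := by
          apply inv_anti₀ ht0 (hnlb i)
  · intro β
    have e1 : ∑ i, β i • ∑ j ∈ A i, a' j • x j = ∑ i, (β i * γ i) • u i :=
      Finset.sum_congr rfl fun i _ => by rw [hy i, smul_smul]
    have hl := hlow (fun i => β i * γ i)
    have e2 : s⁻¹ * ∑ i, ‖β i‖ ≤ ∑ i, ‖β i * γ i‖ := by
      rw [Finset.mul_sum]
      refine Finset.sum_le_sum fun i _ => ?_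
      rw [norm_mul, hγdef, RCLike.norm_ofReal, abs_of_pos (inv_pos.2 (hupos i))]
      rw [mul_comm (s⁻¹) _]
      refine mul_le_mul_of_nonneg_left ?_ (norm_nonneg _)
      exact inv_anti₀ (hupos i) (hnub i)
    have key1 : (1 - d) * s ≤ t := by nlinarith
    have hS : (0:ℝ) ≤ ∑ i, ‖β i‖ := Finset.sum_nonneg fun i _ => norm_nonneg _
    calc (1 - d) * ∑ i, ‖β i‖ ≤ (t * s⁻¹) * ∑ i, ‖β i‖ := by
          refine mul_le_mul_of_nonneg_right ?_ hS
          rw [← div_eq_mul_inv, le_div_iff₀ hs0]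
          exact key1
      _ = t * (s⁻¹ * ∑ i, ‖β i‖) := by ring
      _ ≤ t * ∑ i, ‖β i * γ i‖ := mul_le_mul_of_nonneg_left e2 hts
      _ ≤ ‖∑ i, (β i * γ i) • u i‖ := hl
      _ = ‖∑ i, β i • ∑ j ∈ A i, a' j • x j‖ := by rw [e1]

end Key

lemma sum_Icc_fin {E : Type*} [AddCommMonoid E] (L n : ℕ) (f : ℕ → E) :
    ∑ i ∈ Finset.Icc (L + 1) (L + n), f i = ∑ k : Fin n, f (L + 1 + (k : ℕ)) := by
  induction n with
  | zero =>
    rw [Finset.Icc_eq_empty (by omega)]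
    simp
  | succ m ih =>
    have hins : Finset.Icc (L + 1) (L + (m + 1)) = insert (L + (m + 1)) (Finset.Icc (L + 1) (L + m)) := by
      ext i; simp [Finset.mem_Icc]; omega
    rw [hins, Finset.sum_insert (by simp [Finset.mem_Icc]), ih, Fin.sum_univ_castSucc]
    simp only [Fin.coe_castSucc, Fin.val_last]
    have h1 : L + 1 + m = L + (m + 1) := by omega
    rw [h1, add_comm]

/-- Let `X` be a Banach space, `r > 0`, and `(x j)` a sequence in the closed
unit ball of `X` spanning the spaces `ℓ₁ⁿ` `r`-uniformly.  Then there are pairwise disjoint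
finite sets `A i ⊆ ℕ` and scalars `α j` such that the blocks `y i = ∑_{j ∈ A i} α j • x j`
satisfy `‖y i‖ = 1`, `∑_{j ∈ A i} |α j| < (1 + 2⁻ⁱ)/r`, and for each `n ≥ 1` the finite
sequence `(y i)_{i ∈ B n}`, `B n = {1 + (n-1)n/2, …, n(n+1)/2}`, spans a `(1 - 2⁻ⁿ)`-copy
of `ℓ₁ⁿ`. -/
theorem blocks_spanning_l1n_uniformly_almost_isometrically
    {𝕜 X : Type*} [RCLike 𝕜] [NormedAddCommGroup X] [NormedSpace 𝕜 X] [CompleteSpace X]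
    {r : ℝ} (hr : 0 < r) (x : ℕ → X) (hx : ∀ j, ‖x j‖ ≤ 1)
    (hunif : ∀ n : ℕ, ∃ j : Fin n → ℕ, StrictMono j ∧
      ∀ α : Fin n → 𝕜,
        ‖∑ k, α k • x (j k)‖ ≤ ∑ k, ‖α k‖ ∧
        r * ∑ k, ‖α k‖ ≤ ‖∑ k, α k • x (j k)‖) :
    ∃ (A : ℕ → Finset ℕ) (α : ℕ → 𝕜),
      (∀ i i' : ℕ, i ≠ i' → Disjoint (A i) (A i')) ∧
      (∀ i : ℕ, 1 ≤ i → ‖∑ j ∈ A i, α j • x j‖ = 1) ∧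
      (∀ i : ℕ, 1 ≤ i → ∑ j ∈ A i, ‖α j‖ < (1 + (1/2 : ℝ) ^ i) / r) ∧
      (∀ n : ℕ, 1 ≤ n → ∀ β : ℕ → 𝕜,
        ‖∑ i ∈ Finset.Icc ((n - 1) * n / 2 + 1) (n * (n + 1) / 2),
            β i • ∑ j ∈ A i, α j • x j‖
          ≤ ∑ i ∈ Finset.Icc ((n - 1) * n / 2 + 1) (n * (n + 1) / 2), ‖β i‖ ∧
        (1 - (1/2 : ℝ) ^ n) *
            ∑ i ∈ Finset.Icc ((n - 1) * n / 2 + 1) (n * (n + 1) / 2), ‖β i‖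
          ≤ ‖∑ i ∈ Finset.Icc ((n - 1) * n / 2 + 1) (n * (n + 1) / 2),
              β i • ∑ j ∈ A i, α j • x j‖) := by
  classical
  -- the supremum of achievable lower `ℓ₁` constants
  set S : Set ℝ := {t : ℝ | 0 ≤ t ∧ ∀ n M, Gd 𝕜 x t n M} with hSdef
  have hrS : r ∈ S := ⟨hr.le, base x hunif⟩
  have hSne : S.Nonempty := ⟨r, hrS⟩
  have hbdd : BddAbove S := by
    refine ⟨1, fun t htS => ?_⟩
    obtain ⟨A, a, _, _, hcs, hlow⟩ := htS.2 1 0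
    have hu1 : ‖∑ j ∈ A 0, a j • x j‖ ≤ 1 := by
      calc ‖∑ j ∈ A 0, a j • x j‖ ≤ ∑ j ∈ A 0, ‖a j • x j‖ := norm_sum_le _ _
        _ = ∑ j ∈ A 0, ‖a j‖ * ‖x j‖ := by simp [norm_smul]
        _ ≤ ∑ j ∈ A 0, ‖a j‖ * 1 := Finset.sum_le_sum fun j _ =>
            mul_le_mul_of_nonneg_left (hx j) (norm_nonneg _)
        _ = ∑ j ∈ A 0, ‖a j‖ := by simp
        _ ≤ 1 := hcs 0
    have h2 := hlow (fun _ => (1:𝕜))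
    have e1 : ∑ i : Fin 1, ‖(1:𝕜)‖ = 1 := by simp
    have e2 : ∑ i : Fin 1, (1:𝕜) • ∑ j ∈ A i, a j • x j = ∑ j ∈ A 0, a j • x j := by
      simp [Fin.sum_univ_one]
    rw [e1, e2, mul_one] at h2
    exact le_trans h2 hu1
  set c : ℝ := sSup S with hcdef
  have hrc : r ≤ c := le_csSup hbdd hrS
  have hc : 0 < c := lt_of_lt_of_le hr hrc
  have Hlow : ∀ t' : ℝ, 0 ≤ t' → t' < c → ∀ n M, Gd 𝕜 x t' n M := by
    intro t' _ ht'c n M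
    obtain ⟨t'', ht''S, htt''⟩ := exists_lt_of_lt_csSup hSne ht'c
    obtain ⟨A, a, h1, h2, h3, h4⟩ := ht''S.2 n M
    exact ⟨A, a, h1, h2, h3, fun β =>
      le_trans (mul_le_mul_of_nonneg_right htt''.le
        (Finset.sum_nonneg fun i _ => norm_nonneg _)) (h4 β)⟩
  have Hhigh : ∀ s' : ℝ, 0 ≤ s' → (∀ n M, Gd 𝕜 x s' n M) → s' ≤ c :=
    fun s' h0 hg => le_csSup hbdd ⟨h0, hg⟩
  have hkey := key x hc Hlow Hhigh
  choose FA Fa k1 k2 k3 k4 k5 using hkey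
  -- triangular numbers
  obtain ⟨T, hTeq⟩ : ∃ T : ℕ → ℕ, ∀ n, T n = n * (n + 1) / 2 := ⟨_, fun _ => rfl⟩
  have hT0 : T 0 = 0 := by rw [hTeq]
  have hTstep : ∀ g, 1 ≤ g → T g = T (g - 1) + g := by
    intro g hg
    obtain ⟨m, rfl⟩ : ∃ m, g = m + 1 := ⟨g - 1, by omega⟩
    rw [hTeq, hTeq]
    have h1 : (m + 1) * (m + 1 + 1) = m * (m + 1) + (m + 1) * 2 := by ring
    rw [Nat.add_sub_cancel, h1, Nat.add_mul_div_right _ _ (by norm_num : 0 < 2)]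
  have hTmono : Monotone T := by
    intro a b hab
    rw [hTeq, hTeq]
    exact Nat.div_le_div_right (Nat.mul_le_mul hab (by omega))
  have hTle : ∀ n, n ≤ T n := fun n => by rw [hTeq]; exact nat_le_tri n
  have hT1 : ∀ n, 1 ≤ n → T (n - 1) = (n - 1) * n / 2 := by
    intro n hn
    rw [hTeq]
    congr 2
    omega
  -- bounds separating the support windows of the groups
  obtain ⟨bnd, hbnd0, hbndsucc⟩ :
      ∃ bnd : ℕ → ℕ, bnd 0 = 0 ∧ ∀ m, bnd (m + 1) = max (bnd m + 1)
        (1 + Finset.univ.sup (fun i : Fin (m + 1) => (FA (m + 1) (bnd m) i).sup id)) :=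
    ⟨fun n => Nat.rec 0 (fun m ih => max (ih + 1)
      (1 + Finset.univ.sup (fun i : Fin (m + 1) => (FA (m + 1) ih i).sup id))) n,
      rfl, fun m => rfl⟩
  have hbndlt : ∀ m, bnd m < bnd (m + 1) := by
    intro m
    rw [hbndsucc]
    have := le_max_left (bnd m + 1)
      (1 + Finset.univ.sup (fun i : Fin (m + 1) => (FA (m + 1) (bnd m) i).sup id))
    omega
  have hbndmono : Monotone bnd := monotone_nat_of_le_succ fun m => (hbndlt m).le
  have hbndsm : StrictMono bnd := strictMono_nat_of_lt_succ hbndlt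
  -- support windows
  have hwinlem : ∀ g, 1 ≤ g → ∀ (idx : Fin g), ∀ j ∈ FA g (bnd (g - 1)) idx,
      bnd (g - 1) ≤ j ∧ j < bnd g := by
    intro g hg idx j hj
    obtain ⟨m, rfl⟩ : ∃ m, g = m + 1 := ⟨g - 1, by omega⟩
    rw [Nat.add_sub_cancel] at hj ⊢
    refine ⟨k2 (m + 1) (bnd m) idx j hj, ?_⟩
    have h1 : j ≤ (FA (m + 1) (bnd m) idx).sup id := Finset.le_sup (f := id) hj
    have h2 : (FA (m + 1) (bnd m) idx).sup id
        ≤ Finset.univ.sup (fun i : Fin (m + 1) => (FA (m + 1) (bnd m) i).sup id) :=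
      Finset.le_sup (f := fun i : Fin (m + 1) => (FA (m + 1) (bnd m) i).sup id)
        (Finset.mem_univ idx)
    have h3 := le_max_right (bnd m + 1)
      (1 + Finset.univ.sup (fun i : Fin (m + 1) => (FA (m + 1) (bnd m) i).sup id))
    rw [hbndsucc]
    omega
  -- group index of a block index
  have hexgrp : ∀ i : ℕ, ∃ g, i ≤ T g := fun i => ⟨i, hTle i⟩
  obtain ⟨grp, hgrpspec⟩ : ∃ grp : ℕ → ℕ, ∀ i,
      i ≤ T (grp i) ∧ ∀ g, g < grp i → T g < i :=
    ⟨fun i => Nat.find (hexgrp i), fun i =>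
      ⟨Nat.find_spec (hexgrp i), fun g hg => lt_of_not_ge (Nat.find_min (hexgrp i) hg)⟩⟩
  have hgrp_pos : ∀ i, 1 ≤ i → 1 ≤ grp i := by
    intro i hi
    by_contra h
    have h0 : grp i = 0 := by omega
    have := (hgrpspec i).1
    rw [h0, hT0] at this
    omega
  have hgrp_eq : ∀ n i, 1 ≤ n → T (n - 1) < i → i ≤ T n → grp i = n := by
    intro n i hn h1 h2
    rcases Nat.lt_trichotomy (grp i) n with h | h | h
    · exfalso
      have hle : grp i ≤ n - 1 := by omega
      have := hTmono hle
      have := (hgrpspec i).1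
      omega
    · exact h
    · exfalso
      have := (hgrpspec i).2 n h
      omega
  -- local index within a group
  obtain ⟨loc, hlocdef⟩ : ∃ loc : ℕ → ℕ, ∀ i, loc i = i - (T (grp i - 1) + 1) :=
    ⟨_, fun _ => rfl⟩
  have hloclt : ∀ i, 1 ≤ i → loc i < grp i := by
    intro i hi
    have hg1 : 1 ≤ grp i := hgrp_pos i hi
    have h1 : T (grp i - 1) < i := (hgrpspec i).2 (grp i - 1) (by omega)
    have h2 : i ≤ T (grp i) := (hgrpspec i).1
    have h3 : T (grp i) = T (grp i - 1) + grp i := hTstep (grp i) hg1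
    rw [hlocdef]
    omega
  have hirep : ∀ i, 1 ≤ i → i = T (grp i - 1) + 1 + loc i := by
    intro i hi
    have hg1 : 1 ≤ grp i := hgrp_pos i hi
    have h1 : T (grp i - 1) < i := (hgrpspec i).2 (grp i - 1) (by omega)
    rw [hlocdef]
    omega
  -- the final blocks and coefficients
  obtain ⟨Afin, hAfin0, hAfin1⟩ : ∃ Af : ℕ → Finset ℕ, (Af 0 = ∅) ∧
      ∀ i (h : 1 ≤ i), Af i = FA (grp i) (bnd (grp i - 1)) ⟨loc i, hloclt i h⟩ := by
    refine ⟨fun i => if h : 1 ≤ i then FA (grp i) (bnd (grp i - 1)) ⟨loc i, hloclt i h⟩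
      else ∅, ?_, ?_⟩
    · simp only [dif_neg (show ¬ (1 ≤ 0) by omega)]
    · intro i h; simp only [dif_pos h]
  have hA_eq' : ∀ i (h : 1 ≤ i) (g : ℕ) (hgi : grp i = g) (hl : loc i < g),
      Afin i = FA g (bnd (g - 1)) ⟨loc i, hl⟩ := by
    intro i h g hgi hl
    subst hgi
    exact hAfin1 i h
  -- coefficient function, looked up through the support windows
  have hexJ : ∀ j : ℕ, ∃ m, j < bnd m :=
    fun j => ⟨j + 1, lt_of_lt_of_le (Nat.lt_succ_self j) (hbndsm.le_apply)⟩
  obtain ⟨grpJ, hgrpJspec⟩ : ∃ grpJ : ℕ → ℕ, ∀ j,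
      j < bnd (grpJ j) ∧ ∀ m, m < grpJ j → bnd m ≤ j :=
    ⟨fun j => Nat.find (hexJ j), fun j =>
      ⟨Nat.find_spec (hexJ j), fun m hm => le_of_not_gt (Nat.find_min (hexJ j) hm)⟩⟩
  have hgrpJ_eq : ∀ g j, 1 ≤ g → bnd (g - 1) ≤ j → j < bnd g → grpJ j = g := by
    intro g j hg h1 h2
    rcases Nat.lt_trichotomy (grpJ j) g with h | h | h
    · exfalso
      have hle : grpJ j ≤ g - 1 := by omega
      have := hbndmono hle
      have := (hgrpJspec j).1
      omega
    · exact h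
    · exfalso
      have := (hgrpJspec j).2 g h
      omega
  obtain ⟨αfin, hαfin⟩ : ∃ αf : ℕ → 𝕜, ∀ j, αf j = Fa (grpJ j) (bnd (grpJ j - 1)) j :=
    ⟨_, fun _ => rfl⟩
  -- support window of a block
  have hwin : ∀ i (h : 1 ≤ i), ∀ j ∈ Afin i, bnd (grp i - 1) ≤ j ∧ j < bnd (grp i) := by
    intro i h j hj
    rw [hAfin1 i h] at hj
    exact hwinlem (grp i) (hgrp_pos i h) _ j hj
  -- coherence of the global coefficient function
  have hcoh : ∀ i (h : 1 ≤ i), ∀ j ∈ Afin i,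
      αfin j = Fa (grp i) (bnd (grp i - 1)) j := by
    intro i h j hj
    obtain ⟨hw1, hw2⟩ := hwin i h j hj
    have := hgrpJ_eq (grp i) j (hgrp_pos i h) hw1 hw2
    rw [hαfin, this]
  have hsum_eq : ∀ i (h : 1 ≤ i),
      ∑ j ∈ Afin i, αfin j • x j
        = ∑ j ∈ FA (grp i) (bnd (grp i - 1)) ⟨loc i, hloclt i h⟩,
            Fa (grp i) (bnd (grp i - 1)) j • x j := by
    intro i h
    rw [show (∑ j ∈ Afin i, αfin j • x j)
        = ∑ j ∈ Afin i, Fa (grp i) (bnd (grp i - 1)) j • x j from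
      Finset.sum_congr rfl fun j hj => by rw [hcoh i h j hj]]
    rw [hAfin1 i h]
  have hnorm1 : ∀ i, 1 ≤ i → ‖∑ j ∈ Afin i, αfin j • x j‖ = 1 := by
    intro i h
    rw [hsum_eq i h]
    exact k3 (grp i) (bnd (grp i - 1)) _
  refine ⟨Afin, αfin, ?_, hnorm1, ?_, ?_⟩
  · -- disjointness
    intro i i' hne
    rcases Nat.eq_zero_or_pos i with h0 | hi
    · subst h0; rw [hAfin0]; exact Finset.disjoint_empty_left _
    rcases Nat.eq_zero_or_pos i' with h0 | hi'
    · subst h0; rw [hAfin0]; exact Finset.disjoint_empty_right _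
    rcases Nat.lt_trichotomy (grp i) (grp i') with h | h | h
    · rw [Finset.disjoint_left]
      intro j hj hj'
      have w1 := (hwin i hi j hj).2
      have w2 := (hwin i' hi' j hj').1
      have := hbndmono (show grp i ≤ grp i' - 1 by omega)
      omega
    · -- same group
      have hll : loc i ≠ loc i' := by
        intro hl
        apply hne
        have e1 := hirep i hi
        have e2 := hirep i' hi'
        rw [h] at e1
        omega
      rw [hA_eq' i hi (grp i') h (h ▸ hloclt i hi), hAfin1 i' hi']
      exact k1 (grp i') (bnd (grp i' - 1)) _ _ (by
        intro hcontra
        exact hll (congrArg Fin.val hcontra))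
    · rw [Finset.disjoint_left]
      intro j hj hj'
      have w1 := (hwin i hi j hj).1
      have w2 := (hwin i' hi' j hj').2
      have := hbndmono (show grp i' ≤ grp i - 1 by omega)
      omega
  · -- coefficient bound
    intro i hi
    have hcs : ∑ j ∈ Afin i, ‖αfin j‖
        ≤ (c * (1 - (1/2 : ℝ) ^ (grp i * (grp i + 1) / 2 + 2)))⁻¹ := by
      rw [show (∑ j ∈ Afin i, ‖αfin j‖)
          = ∑ j ∈ Afin i, ‖Fa (grp i) (bnd (grp i - 1)) j‖ from
        Finset.sum_congr rfl fun j hj => by rw [hcoh i hi j hj]]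
      rw [hAfin1 i hi]
      exact k4 (grp i) (bnd (grp i - 1)) _
    have hiT : i ≤ grp i * (grp i + 1) / 2 := by
      have := (hgrpspec i).1
      rw [hTeq] at this
      exact this
    refine lt_of_le_of_lt hcs ?_
    -- arithmetic
    set N : ℕ := grp i * (grp i + 1) / 2 with hN
    set ε : ℝ := (1/2 : ℝ) ^ (N + 2) with hε
    have hε0 : (0:ℝ) < ε := by positivity
    set d : ℝ := (1/2 : ℝ) ^ i with hd
    have hd0 : (0:ℝ) < d := by positivity
    have hd1 : d ≤ 1 := pow_le_one₀ (by norm_num) (by norm_num)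
    have h4 : 4 * ε ≤ d := by
      have h5 : ε ≤ (1/2 : ℝ) ^ (i + 2) :=
        pow_le_pow_of_le_one (by norm_num) (by norm_num) (by omega)
      have h6 : (1/2 : ℝ) ^ (i + 2) = d / 4 := by rw [pow_add, hd]; ring
      linarith
    have hε14 : ε ≤ 1/4 := by nlinarith
    have hpos1 : (0:ℝ) < r * (1 - ε) := by nlinarith
    have hinvle : (c * (1 - ε))⁻¹ ≤ (r * (1 - ε))⁻¹ :=
      inv_anti₀ hpos1 (by nlinarith)
    refine lt_of_le_of_lt hinvle ?_
    rw [← one_div, div_lt_div_iff₀ hpos1 hr]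
    have hde : d * ε ≤ ε := by nlinarith
    have hgt : (0:ℝ) < d - ε - d * ε := by linarith
    nlinarith [mul_pos hr hgt]
  · -- the group estimates
    intro n hn β
    have hIccgrp : ∀ i ∈ Finset.Icc ((n - 1) * n / 2 + 1) (n * (n + 1) / 2),
        1 ≤ i ∧ grp i = n := by
      intro i hi
      rw [Finset.mem_Icc] at hi
      have h1 : T (n - 1) < i := by
        rw [hT1 n hn]; omega
      have h2 : i ≤ T n := by rw [hTeq]; omega
      exact ⟨by omega, hgrp_eq n i hn h1 h2⟩
    constructor
    · -- upper bound
      calc ‖∑ i ∈ Finset.Icc ((n - 1) * n / 2 + 1) (n * (n + 1) / 2),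
            β i • ∑ j ∈ Afin i, αfin j • x j‖
          ≤ ∑ i ∈ Finset.Icc ((n - 1) * n / 2 + 1) (n * (n + 1) / 2),
            ‖β i • ∑ j ∈ Afin i, αfin j • x j‖ := norm_sum_le _ _
        _ = ∑ i ∈ Finset.Icc ((n - 1) * n / 2 + 1) (n * (n + 1) / 2), ‖β i‖ := by
            refine Finset.sum_congr rfl fun i hi => ?_
            rw [norm_smul, hnorm1 i (hIccgrp i hi).1, mul_one]
    · -- lower bound
      have hL : (n - 1) * n / 2 + 1 = T (n - 1) + 1 := by rw [hT1 n hn]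
      have hR : n * (n + 1) / 2 = T n := (hTeq n).symm
      have hcard : T n + 1 - (T (n - 1) + 1) = n := by
        have := hTstep n hn
        omega
      have hreidx : ∀ (E : Type) (_ : AddCommMonoid E), True := fun _ _ => trivial
      -- reindex both sums over `Fin n`
      have hidx : ∀ k : Fin n, 1 ≤ T (n - 1) + 1 + (k:ℕ) ∧ grp (T (n - 1) + 1 + (k:ℕ)) = n
          ∧ loc (T (n - 1) + 1 + (k:ℕ)) = (k:ℕ) := by
        intro k
        have h1 : T (n - 1) < T (n - 1) + 1 + (k:ℕ) := by omega
        have h2 : T (n - 1) + 1 + (k:ℕ) ≤ T n := by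
          have := hTstep n hn
          have := k.isLt
          omega
        have hg := hgrp_eq n _ hn h1 h2
        refine ⟨by omega, hg, ?_⟩
        rw [hlocdef, hg]
        omega
      have hR' : n * (n + 1) / 2 = T (n - 1) + n := by
        have := hTstep n hn
        omega
      have hsum1 : ∀ (f : ℕ → ℝ),
          ∑ i ∈ Finset.Icc ((n - 1) * n / 2 + 1) (n * (n + 1) / 2), f i
            = ∑ k : Fin n, f (T (n - 1) + 1 + (k:ℕ)) := by
        intro f
        rw [hL, hR', sum_Icc_fin (T (n - 1)) n f]
      have hsum2 : ∀ (f : ℕ → X),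
          ∑ i ∈ Finset.Icc ((n - 1) * n / 2 + 1) (n * (n + 1) / 2), f i
            = ∑ k : Fin n, f (T (n - 1) + 1 + (k:ℕ)) := by
        intro f
        rw [hL, hR', sum_Icc_fin (T (n - 1)) n f]
      set β' : Fin n → 𝕜 := fun k => β (T (n - 1) + 1 + (k:ℕ)) with hβ'
      have hblocks : ∀ k : Fin n,
          ∑ j ∈ Afin (T (n - 1) + 1 + (k:ℕ)), αfin j • x j
            = ∑ j ∈ FA n (bnd (n - 1)) k, Fa n (bnd (n - 1)) j • x j := by
        intro k
        obtain ⟨hk1, hk2, hk3⟩ := hidx k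
        have hAeq : Afin (T (n - 1) + 1 + (k:ℕ)) = FA n (bnd (n - 1)) k := by
          rw [hA_eq' _ hk1 n hk2 (by rw [hk3]; exact k.isLt)]
          congr 1
          exact Fin.ext hk3
        calc ∑ j ∈ Afin (T (n - 1) + 1 + (k:ℕ)), αfin j • x j
            = ∑ j ∈ Afin (T (n - 1) + 1 + (k:ℕ)), Fa n (bnd (n - 1)) j • x j :=
              Finset.sum_congr rfl fun j hj => by rw [hcoh _ hk1 j hj, hk2]
          _ = ∑ j ∈ FA n (bnd (n - 1)) k, Fa n (bnd (n - 1)) j • x j := by rw [hAeq]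
      rw [hsum1 (fun i => ‖β i‖), hsum2 (fun i => β i • ∑ j ∈ Afin i, αfin j • x j)]
      have e : ∑ k : Fin n, β (T (n - 1) + 1 + (k:ℕ)) • ∑ j ∈ Afin (T (n - 1) + 1 + (k:ℕ)),
            αfin j • x j
          = ∑ k : Fin n, β' k • ∑ j ∈ FA n (bnd (n - 1)) k, Fa n (bnd (n - 1)) j • x j :=
        Finset.sum_congr rfl fun k _ => by rw [hblocks k, hβ']
      rw [e]
      exact k5 n (bnd (n - 1)) β'
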